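/- The center of a Steiner loop L_S of order v+1 is an elementary abelian 2-group; hence the set of Veblen points of S has cardinality 2^t − 1 for some t ≥ 0, and 2^t divides v+1. -/

import Mathlib

structure SteinerLoopStr (L : Type) where
  mul : L → L → L
  one : L
  one_mul : ∀ x, mul one x = x
  comm : ∀ x y, mul x y = mul y x
  mul_self : ∀ x, mul x x = one
  ts : ∀ x y, mul x (mul x y) = y

/-- The center of a Steiner loop. -/
def SteinerCenter {L : Type} (S : SteinerLoopStr L) : Set L :=
  {z | ∀ a b : L, S.mul a (S.mul z b) = S.mul (S.mul a z) b ∧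
        S.mul (S.mul a z) b = S.mul z (S.mul a b)}

namespace SteinerAux

variable {L : Type} (S : SteinerLoopStr L)

lemma mul_one' (x : L) : S.mul x S.one = x := by rw [S.comm]; exact S.one_mul x

lemma one_mem : S.one ∈ SteinerCenter S := by
  intro a b
  rw [S.one_mul, mul_one' S, S.one_mul]
  exact ⟨rfl, rfl⟩

lemma mul_mem {z₁ z₂ : L} (h₁ : z₁ ∈ SteinerCenter S) (h₂ : z₂ ∈ SteinerCenter S) :
    S.mul z₁ z₂ ∈ SteinerCenter S := by
  intro a b
  constructor
  · calc S.mul a (S.mul (S.mul z₁ z₂) b)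
        = S.mul a (S.mul z₁ (S.mul z₂ b)) := by
          rw [S.comm z₁ z₂, (h₁ z₂ b).2]
      _ = S.mul (S.mul a z₁) (S.mul z₂ b) := (h₁ a (S.mul z₂ b)).1
      _ = S.mul (S.mul (S.mul a z₁) z₂) b := (h₂ (S.mul a z₁) b).1
      _ = S.mul (S.mul a (S.mul z₁ z₂)) b := by rw [(h₁ a z₂).1]
  · calc S.mul (S.mul a (S.mul z₁ z₂)) b
        = S.mul (S.mul (S.mul a z₁) z₂) b := by rw [(h₁ a z₂).1]
      _ = S.mul z₂ (S.mul (S.mul a z₁) b) := (h₂ (S.mul a z₁) b).2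
      _ = S.mul z₂ (S.mul z₁ (S.mul a b)) := by rw [(h₁ a b).2]
      _ = S.mul (S.mul z₂ z₁) (S.mul a b) := (h₁ z₂ (S.mul a b)).1
      _ = S.mul (S.mul z₁ z₂) (S.mul a b) := by rw [S.comm z₂ z₁]

lemma assoc_center {z₁ z₂ z₃ : L} (h₂ : z₂ ∈ SteinerCenter S) :
    S.mul (S.mul z₁ z₂) z₃ = S.mul z₁ (S.mul z₂ z₃) :=
  ((h₂ z₁ z₃).1).symm

/-- The relation `x ≈ y ↔ x*y ∈ Z` is an equivalence relation. -/
def centerSetoid : Setoid L where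
  r x y := S.mul x y ∈ SteinerCenter S
  iseqv := by
    constructor
    · intro x; rw [S.mul_self]; exact one_mem S
    · intro x y h; rwa [S.comm]
    · intro x y z hxy hyz
      have key : S.mul x z = S.mul (S.mul x y) (S.mul y z) := by
        calc S.mul x z
            = S.mul (S.mul y (S.mul x y)) z := by rw [S.comm x y, S.ts]
          _ = S.mul (S.mul x y) (S.mul y z) := (hxy y z).2
      rw [key]; exact mul_mem S hxy hyz

/-- Translation by `x` gives a bijection between the class of `x` and the center. -/
def classEquiv (x : L) :
    {y : L // S.mul x y ∈ SteinerCenter S} ≃ ↥(SteinerCenter S) where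
  toFun y := ⟨S.mul x y, y.2⟩
  invFun z := ⟨S.mul x z, by
    show S.mul x (S.mul x (z : L)) ∈ SteinerCenter S
    rw [S.ts]; exact z.2⟩
  left_inv y := Subtype.ext (S.ts x y)
  right_inv z := Subtype.ext (S.ts x z)

end SteinerAux

theorem center_elementary_abelian_two {L : Type} [Fintype L]
    (S : SteinerLoopStr L) :
    S.one ∈ SteinerCenter S ∧
    (∀ z ∈ SteinerCenter S, S.mul z z = S.one) ∧
    (∀ z₁ ∈ SteinerCenter S, ∀ z₂ ∈ SteinerCenter S,
        S.mul z₁ z₂ ∈ SteinerCenter S) ∧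
    (∀ z₁ ∈ SteinerCenter S, ∀ z₂ ∈ SteinerCenter S, ∀ z₃ ∈ SteinerCenter S,
        S.mul (S.mul z₁ z₂) z₃ = S.mul z₁ (S.mul z₂ z₃)) ∧
    ∃ t : ℕ, (SteinerCenter S \ {S.one}).ncard = 2 ^ t - 1 ∧
      2 ^ t ∣ Fintype.card L := by
  classical
  refine ⟨SteinerAux.one_mem S, fun z _ => S.mul_self z,
    fun z₁ h₁ z₂ h₂ => SteinerAux.mul_mem S h₁ h₂,
    fun z₁ _ z₂ h₂ z₃ _ => SteinerAux.assoc_center S h₂, ?_⟩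
  -- group structure on the center
  letI : Group ↥(SteinerCenter S) :=
    { mul := fun a b => ⟨S.mul a b, SteinerAux.mul_mem S a.2 b.2⟩
      one := ⟨S.one, SteinerAux.one_mem S⟩
      inv := id
      mul_assoc := fun a b c => Subtype.ext (SteinerAux.assoc_center S b.2)
      one_mul := fun a => Subtype.ext (S.one_mul a)
      mul_one := fun a => Subtype.ext (SteinerAux.mul_one' S a)
      inv_mul_cancel := fun a => Subtype.ext (S.mul_self a) }
  haveI : Fact (Nat.Prime 2) := ⟨Nat.prime_two⟩
  have hp : IsPGroup 2 ↥(SteinerCenter S) := by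
    intro g
    refine ⟨1, ?_⟩
    have : g ^ 2 = g * g := sq g
    rw [pow_one, this]
    exact Subtype.ext (S.mul_self g)
  obtain ⟨t, ht⟩ := (IsPGroup.iff_card).mp hp
  have hcardZ : Fintype.card ↥(SteinerCenter S) = 2 ^ t := by
    rw [← Nat.card_eq_fintype_card]; exact ht
  refine ⟨t, ?_, ?_⟩
  · have h1 : (SteinerCenter S).ncard = 2 ^ t := by
      rw [← Nat.card_coe_set_eq, Nat.card_eq_fintype_card, hcardZ]
    rw [Set.ncard_diff_singleton_of_mem (SteinerAux.one_mem S), h1]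
  · rw [← hcardZ]
    -- card of center divides card of L via partition into classes
    set st := SteinerAux.centerSetoid S with hst
    have hcard : Fintype.card L =
        Fintype.card (Quotient st) * Fintype.card ↥(SteinerCenter S) := by
      rw [← Fintype.card_congr (Equiv.sigmaFiberEquiv (Quotient.mk st)),
        Fintype.card_sigma]
      have hfiber : ∀ q : Quotient st,
          Fintype.card {x : L // Quotient.mk st x = q} =
            Fintype.card ↥(SteinerCenter S) := by
        intro q
        have e1 : {x : L // Quotient.mk st x = q} ≃
            {y : L // S.mul q.out y ∈ SteinerCenter S} := by
          refine Equiv.subtypeEquivRight fun x => ?_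
          rw [Quotient.mk_eq_iff_out]
          show S.mul x q.out ∈ SteinerCenter S ↔ _
          rw [S.comm]
        rw [Fintype.card_congr (e1.trans (SteinerAux.classEquiv S q.out))]
      simp [hfiber, Finset.sum_const, Finset.card_univ]
    exact ⟨Fintype.card (Quotient st), by rw [hcard, Nat.mul_comm]⟩
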